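/- Let (X, 𝔅, μ) be a probability space, b ∈ (1, ∞], and ζ, τ ∈ Ψ(b). Let g_n : X → ℝ (n ∈ ℕ) and g_∞ : X → ℝ be measurable functions such that: (i) M := sup_n sup_{p ∈ [1, b)} |g_n|_p / ζ(p) < ∞; (ii) for every p ∈ [1, b), |g_n − g_∞|_p → 0 as n → ∞; (iii) for every ε > 0 there exists p₁ ∈ [1, b) such that ζ(p) ≤ ε · τ(p) for all p ∈ (p₁, b) (i.e. ζ(p)/τ(p) → 0 as p → b−). Then sup_{p ∈ [1, b)} |g_n − g_∞|_p / τ(p) → 0 as n → ∞, i.e. g_n converges to g_∞ in the Grand Lebesgue norm Gτ. -/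

import Mathlib

open MeasureTheory ENNReal Real Set Filter

/-- **Theorem of Section 5.** If a sequence `(g_n)` is bounded in `Gζ`, converges to `g_∞`
in every `L^p`-norm, `p ∈ [1,b)`, and `ζ(p)/τ(p) → 0` as `p → b-`, then `g_n → g_∞` in the
Grand Lebesgue norm `Gτ`. -/
theorem GLS_convergence {X : Type*} [MeasurableSpace X] (μ : Measure X) [IsProbabilityMeasure μ]
    (b : EReal) (hb : 1 < b) (ζ τ : ℝ → ℝ)
    (hζcont : ContinuousOn ζ {p : ℝ | 1 ≤ p ∧ (p : EReal) < b})
    (hζone : ∀ p : ℝ, 1 ≤ p → (p : EReal) < b → 1 ≤ ζ p)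
    (hτcont : ContinuousOn τ {p : ℝ | 1 ≤ p ∧ (p : EReal) < b})
    (hτone : ∀ p : ℝ, 1 ≤ p → (p : EReal) < b → 1 ≤ τ p)
    (g : ℕ → X → ℝ) (g_inf : X → ℝ)
    (hgm : ∀ n, Measurable (g n)) (hg_infm : Measurable g_inf)
    (hbdd : (⨆ (n : ℕ) (p : ℝ) (_ : 1 ≤ p) (_ : (p : EReal) < b),
        eLpNorm (g n) (ENNReal.ofReal p) μ / ENNReal.ofReal (ζ p)) < ⊤)
    (hconv : ∀ p : ℝ, 1 ≤ p → (p : EReal) < b →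
      Filter.Tendsto (fun n : ℕ => eLpNorm (fun x => g n x - g_inf x) (ENNReal.ofReal p) μ)
        Filter.atTop (nhds 0))
    (hsmall : ∀ ε : ℝ, 0 < ε → ∃ p₁ : ℝ, 1 ≤ p₁ ∧ (p₁ : EReal) < b ∧
      ∀ p : ℝ, p₁ < p → (p : EReal) < b → ζ p ≤ ε * τ p) :
    Filter.Tendsto (fun n : ℕ => ⨆ (p : ℝ) (_ : 1 ≤ p) (_ : (p : EReal) < b),
        eLpNorm (fun x => g n x - g_inf x) (ENNReal.ofReal p) μ / ENNReal.ofReal (τ p))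
      Filter.atTop (nhds 0) := by
  set M : ℝ≥0∞ := ⨆ (n : ℕ) (p : ℝ) (_ : 1 ≤ p) (_ : (p : EReal) < b),
      eLpNorm (g n) (ENNReal.ofReal p) μ / ENNReal.ofReal (ζ p) with hM
  have hMlt : M < ⊤ := hbdd
  -- bound on g n
  have hgle : ∀ (n : ℕ) (p : ℝ), 1 ≤ p → (p : EReal) < b →
      eLpNorm (g n) (ENNReal.ofReal p) μ ≤ M * ENNReal.ofReal (ζ p) := by
    intro n p hp1 hpb
    have hζ0 : ENNReal.ofReal (ζ p) ≠ 0 := by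
      simp only [ne_eq, ENNReal.ofReal_eq_zero, not_le]
      linarith [hζone p hp1 hpb]
    have hdiv : eLpNorm (g n) (ENNReal.ofReal p) μ / ENNReal.ofReal (ζ p) ≤ M := by
      rw [hM]
      refine le_iSup_of_le n ?_
      refine le_iSup_of_le p ?_
      refine le_iSup_of_le hp1 ?_
      exact le_iSup_of_le hpb le_rfl
    rw [ENNReal.div_le_iff hζ0 ENNReal.ofReal_ne_top] at hdiv
    exact hdiv
  -- bound on g_inf
  have hinfle : ∀ (p : ℝ), 1 ≤ p → (p : EReal) < b →
      eLpNorm g_inf (ENNReal.ofReal p) μ ≤ M * ENNReal.ofReal (ζ p) := by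
    intro p hp1 hpb
    refine ENNReal.le_of_forall_pos_le_add fun η hη hfin => ?_
    have hev : ∀ᶠ n : ℕ in atTop,
        eLpNorm (fun x => g n x - g_inf x) (ENNReal.ofReal p) μ < (η : ℝ≥0∞) :=
      (hconv p hp1 hpb).eventually_lt_const (by exact_mod_cast hη.bot_lt)
    obtain ⟨n, hn⟩ := hev.exists
    have hp1' : (1 : ℝ≥0∞) ≤ ENNReal.ofReal p := by
      rw [show (1 : ℝ≥0∞) = ENNReal.ofReal 1 by simp]
      exact ENNReal.ofReal_le_ofReal hp1
    have htri : eLpNorm g_inf (ENNReal.ofReal p) μ ≤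
        eLpNorm (g n) (ENNReal.ofReal p) μ
          + eLpNorm (fun x => g n x - g_inf x) (ENNReal.ofReal p) μ := by
      have := eLpNorm_sub_le (μ := μ) (p := ENNReal.ofReal p)
        (hgm n).aestronglyMeasurable
        ((hgm n).sub hg_infm).aestronglyMeasurable
        hp1'
      have heq : (g n) - (g n - g_inf) = g_inf := by
        funext x; simp
      rw [heq] at this
      exact this
    exact htri.trans (add_le_add (hgle n p hp1 hpb) hn.le)
  -- main argument
  rw [ENNReal.tendsto_nhds_zero]
  intro ε hε
  set K : ℝ≥0∞ := M + M with hK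
  have hKfin : K ≠ ⊤ := by
    simp [hK, ENNReal.add_ne_top, hMlt.ne]
  have hpos : (0 : ℝ≥0∞) < ε / K := ENNReal.div_pos hε.ne' hKfin
  obtain ⟨r, -, hr0, hrlt⟩ := ENNReal.lt_iff_exists_real_btwn.mp hpos
  have hr0' : 0 < r := ENNReal.ofReal_pos.mp hr0
  have hKr : K * ENNReal.ofReal r ≤ ε :=
    (mul_le_mul_right hrlt.le K).trans ENNReal.mul_div_le
  obtain ⟨p₁, hp₁1, hp₁b, hp₁⟩ := hsmall r hr0'
  have hev : ∀ᶠ n : ℕ in atTop,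
      eLpNorm (fun x => g n x - g_inf x) (ENNReal.ofReal p₁) μ < ε :=
    (hconv p₁ hp₁1 hp₁b).eventually_lt_const hε
  filter_upwards [hev] with n hn
  refine iSup_le fun p => iSup_le fun hp1 => iSup_le fun hpb => ?_
  have hτ0 : ENNReal.ofReal (τ p) ≠ 0 := by
    simp only [ne_eq, ENNReal.ofReal_eq_zero, not_le]
    linarith [hτone p hp1 hpb]
  rw [ENNReal.div_le_iff hτ0 ENNReal.ofReal_ne_top]
  rcases le_or_gt p p₁ with hpp | hpp
  · -- small exponents : monotonicity
    have hmono : eLpNorm (fun x => g n x - g_inf x) (ENNReal.ofReal p) μ ≤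
        eLpNorm (fun x => g n x - g_inf x) (ENNReal.ofReal p₁) μ :=
      eLpNorm_le_eLpNorm_of_exponent_le (ENNReal.ofReal_le_ofReal hpp)
        ((hgm n).sub hg_infm).aestronglyMeasurable
    calc eLpNorm (fun x => g n x - g_inf x) (ENNReal.ofReal p) μ
        ≤ ε := hmono.trans hn.le
      _ = ε * 1 := (mul_one ε).symm
      _ ≤ ε * ENNReal.ofReal (τ p) := by
          refine mul_le_mul_right ?_ ε
          rw [show (1 : ℝ≥0∞) = ENNReal.ofReal 1 by simp]
          exact ENNReal.ofReal_le_ofReal (hτone p hp1 hpb)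
  · -- large exponents : smallness of ζ/τ
    have hp1' : (1 : ℝ≥0∞) ≤ ENNReal.ofReal p := by
      rw [show (1 : ℝ≥0∞) = ENNReal.ofReal 1 by simp]
      exact ENNReal.ofReal_le_ofReal hp1
    have htri : eLpNorm (fun x => g n x - g_inf x) (ENNReal.ofReal p) μ ≤
        eLpNorm (g n) (ENNReal.ofReal p) μ + eLpNorm g_inf (ENNReal.ofReal p) μ := by
      have := eLpNorm_sub_le (μ := μ) (p := ENNReal.ofReal p)
        (hgm n).aestronglyMeasurable hg_infm.aestronglyMeasurable hp1'
      exact this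
    have hζτ : ENNReal.ofReal (ζ p) ≤ ENNReal.ofReal r * ENNReal.ofReal (τ p) := by
      rw [← ENNReal.ofReal_mul hr0'.le]
      exact ENNReal.ofReal_le_ofReal (hp₁ p hpp hpb)
    calc eLpNorm (fun x => g n x - g_inf x) (ENNReal.ofReal p) μ
        ≤ M * ENNReal.ofReal (ζ p) + M * ENNReal.ofReal (ζ p) :=
          htri.trans (add_le_add (hgle n p hp1 hpb) (hinfle p hp1 hpb))
      _ = K * ENNReal.ofReal (ζ p) := by rw [hK, add_mul]
      _ ≤ K * (ENNReal.ofReal r * ENNReal.ofReal (τ p)) := mul_le_mul_right hζτ K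
      _ = (K * ENNReal.ofReal r) * ENNReal.ofReal (τ p) := by ring
      _ ≤ ε * ENNReal.ofReal (τ p) := mul_le_mul_left hKr _
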